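/- Injectivity of the heat operator on functions of exponential growth: fix an integer d ≥ 1 and real numbers t > 0, a > 0. Let f : ℝ^d → ℂ be continuous with |f(x)| ≤ M e^{a|x|} for all x ∈ ℝ^d and some M > 0. If (f * h_t)(x) = 0 for every x ∈ ℝ^d, then f(x) = 0 for every x ∈ ℝ^d. -/

import Mathlib

open MeasureTheory Complex Filter
open scoped ENNReal RealInnerProductSpace FourierTransform

set_option linter.unusedVariables false

lemma aux_int (d : ℕ) (b c : ℝ) (hb : 0 < b) :
    Integrable (fun y : EuclideanSpace ℝ (Fin d) => Real.exp (c * ‖y‖ - b * ‖y‖ ^ 2)) := by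
  have h1 : Integrable (fun v : EuclideanSpace ℝ (Fin d) =>
      Complex.exp (-((b/2 : ℝ) : ℂ) * (‖v‖ : ℂ) ^ 2 + 0 * ((inner ℝ (0 : EuclideanSpace ℝ (Fin d)) v : ℝ) : ℂ))) :=
    GaussianFourier.integrable_cexp_neg_mul_sq_norm_add (by norm_num; positivity) 0 0
  have h2 : Integrable (fun v : EuclideanSpace ℝ (Fin d) => Real.exp (-(b/2) * ‖v‖ ^ 2)) := by
    have := h1.norm
    simpa [Complex.norm_exp, neg_mul, ← Complex.ofReal_pow] using this
  have h3 := h2.const_mul (Real.exp (c ^ 2 / (2 * b)))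
  refine h3.mono' ?_ ?_
  · exact (Real.continuous_exp.comp (by fun_prop)).aestronglyMeasurable
  · filter_upwards with y
    rw [Real.norm_eq_abs, abs_of_pos (Real.exp_pos _), ← Real.exp_add]
    apply Real.exp_le_exp.2
    have key : c ^ 2 / (2 * b) + -(b / 2) * ‖y‖ ^ 2 - (c * ‖y‖ - b * ‖y‖ ^ 2)
        = (c - b * ‖y‖) ^ 2 / (2 * b) := by field_simp; ring
    linarith [key, div_nonneg (sq_nonneg (c - b * ‖y‖)) (by linarith : (0:ℝ) ≤ 2 * b)]

/-- The heat kernel `h_t(x) = (4πt)^{-d/2} e^{-|x|²/(4t)}` on `ℝ^d`. -/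
noncomputable def heatK (d : ℕ) (t : ℝ) (x : EuclideanSpace ℝ (Fin d)) : ℝ :=
  (4 * Real.pi * t) ^ (-(d : ℝ) / 2) * Real.exp (-‖x‖ ^ 2 / (4 * t))

/-- Injectivity of the heat operator on continuous functions of exponential growth. -/
theorem statement14 (d : ℕ) (hd : 1 ≤ d) (t a : ℝ) (ht : 0 < t) (ha : 0 < a)
    (f : EuclideanSpace ℝ (Fin d) → ℂ) (hf : Continuous f)
    (M : ℝ) (hM : 0 < M)
    (hgrowth : ∀ x, ‖f x‖ ≤ M * Real.exp (a * ‖x‖))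
    (heq : ∀ x, (∫ y, f (x - y) * (heatK d t y : ℂ)) = 0) :
    ∀ x, f x = 0 := by
  set g : EuclideanSpace ℝ (Fin d) → ℂ := fun y => f y * ((Real.exp (-‖y‖ ^ 2 / (4 * t)) : ℝ) : ℂ) with hg
  have hg_cont : Continuous g :=
    hf.mul (Complex.continuous_ofReal.comp (Real.continuous_exp.comp (by fun_prop)))
  have hg_bound : ∀ y : EuclideanSpace ℝ (Fin d), ‖g y‖ ≤ M * Real.exp (a * ‖y‖ - (1/(4*t)) * ‖y‖ ^ 2) := by
    intro y
    rw [hg]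
    simp only [norm_mul, Complex.norm_real, Real.norm_eq_abs, abs_of_pos (Real.exp_pos _)]
    calc ‖f y‖ * Real.exp (-‖y‖ ^ 2 / (4 * t))
        ≤ (M * Real.exp (a * ‖y‖)) * Real.exp (-‖y‖ ^ 2 / (4 * t)) := by
          exact mul_le_mul_of_nonneg_right (by simpa using hgrowth y) (Real.exp_pos _).le
      _ = M * Real.exp (a * ‖y‖ - (1/(4*t)) * ‖y‖ ^ 2) := by
          rw [mul_assoc, ← Real.exp_add]; congr 1; field_simp; ring
  have hg_int : Integrable g := by
    refine ((aux_int d (1/(4*t)) a (by positivity)).const_mul M).mono'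
      hg_cont.aestronglyMeasurable ?_
    filter_upwards with y using hg_bound y
  have key : ∀ x : EuclideanSpace ℝ (Fin d), (∫ y, g y * ((Real.exp (⟪x, y⟫ / (2 * t)) : ℝ) : ℂ)) = 0 := by
    intro x
    have h1 : (∫ y : EuclideanSpace ℝ (Fin d), f y * (heatK d t (x - y) : ℂ)) = 0 := by
      have h2 := MeasureTheory.integral_sub_left_eq_self
        (fun y : EuclideanSpace ℝ (Fin d) => f (x - y) * (heatK d t y : ℂ)) volume x
      simp only [sub_sub_cancel] at h2
      rw [h2]; exact heq x
    have hexp : ∀ y : EuclideanSpace ℝ (Fin d), f y * (heatK d t (x - y) : ℂ)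
        = (((4 * Real.pi * t) ^ (-(d:ℝ)/2) * Real.exp (-‖x‖^2/(4*t)) : ℝ) : ℂ)
          * (g y * ((Real.exp (⟪x, y⟫ / (2*t)) : ℝ) : ℂ)) := by
      intro y
      have hnorm : ‖x - y‖^2 = ‖x‖^2 - 2*⟪x,y⟫ + ‖y‖^2 := norm_sub_sq_real x y
      have hE : -‖x - y‖^2/(4*t) = -‖x‖^2/(4*t) + (⟪x,y⟫/(2*t) + -‖y‖^2/(4*t)) := by
        rw [hnorm]; field_simp; ring
      simp only [heatK, hg, hE, Real.exp_add]
      push_cast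
      ring
    have h3 : (∫ y : EuclideanSpace ℝ (Fin d), f y * (heatK d t (x - y) : ℂ))
        = (((4 * Real.pi * t) ^ (-(d:ℝ)/2) * Real.exp (-‖x‖^2/(4*t)) : ℝ) : ℂ)
          * ∫ y, g y * ((Real.exp (⟪x, y⟫ / (2*t)) : ℝ) : ℂ) := by
      simp_rw [hexp]
      exact integral_const_mul _ _
    rw [h3] at h1
    rcases mul_eq_zero.1 h1 with h | h
    · exact absurd h (Complex.ofReal_ne_zero.2 (by positivity))
    · exact h
  have hF : ∀ ξ : EuclideanSpace ℝ (Fin d),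
      (∫ y, g y * Complex.exp ((-2 * (Real.pi : ℂ) * Complex.I) * ((⟪ξ, y⟫ : ℝ) : ℂ))) = 0 := by
    intro ξ
    set φ : ℂ → ℂ :=
      fun z => ∫ y : EuclideanSpace ℝ (Fin d), g y * Complex.exp (z * ((⟪ξ, y⟫ : ℝ) : ℂ)) with hφ
    have hbnd : ∀ (z : ℂ) (y : EuclideanSpace ℝ (Fin d)),
        ‖Complex.exp (z * ((⟪ξ, y⟫ : ℝ) : ℂ))‖ ≤ Real.exp (‖z‖ * (‖ξ‖ * ‖y‖)) := by
      intro z y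
      rw [Complex.norm_exp]
      apply Real.exp_le_exp.2
      have h1 : (z * ((⟪ξ, y⟫ : ℝ) : ℂ)).re = z.re * ⟪ξ, y⟫ := by simp [Complex.mul_re]
      rw [h1]
      calc z.re * ⟪ξ, y⟫ ≤ |z.re * ⟪ξ, y⟫| := le_abs_self _
        _ = |z.re| * |⟪ξ, y⟫| := abs_mul _ _
        _ ≤ ‖z‖ * (‖ξ‖ * ‖y‖) := by
            refine mul_le_mul (Complex.abs_re_le_norm z) (abs_real_inner_le_norm ξ y)
              (abs_nonneg _) (norm_nonneg _)
    have hic : Continuous fun y : EuclideanSpace ℝ (Fin d) => (⟪ξ, y⟫ : ℝ) :=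
      continuous_const.inner continuous_id
    have hic' : Continuous fun y : EuclideanSpace ℝ (Fin d) => ((⟪ξ, y⟫ : ℝ) : ℂ) :=
      Complex.continuous_ofReal.comp hic
    have hmeas : ∀ z : ℂ, AEStronglyMeasurable
        (fun y : EuclideanSpace ℝ (Fin d) => g y * Complex.exp (z * ((⟪ξ, y⟫ : ℝ) : ℂ))) volume :=
      fun z => (hg_cont.mul (Complex.continuous_exp.comp
        (continuous_const.mul hic'))).aestronglyMeasurable
    have hFz_int : ∀ z : ℂ, Integrable
        (fun y : EuclideanSpace ℝ (Fin d) => g y * Complex.exp (z * ((⟪ξ, y⟫ : ℝ) : ℂ))) := by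
      intro z
      refine ((aux_int d (1/(4*t)) (a + ‖z‖ * ‖ξ‖) (by positivity)).const_mul M).mono'
        (hmeas z) ?_
      filter_upwards with y
      rw [norm_mul]
      calc ‖g y‖ * ‖Complex.exp (z * ((⟪ξ, y⟫ : ℝ) : ℂ))‖
          ≤ (M * Real.exp (a * ‖y‖ - (1/(4*t)) * ‖y‖ ^ 2)) * Real.exp (‖z‖ * (‖ξ‖ * ‖y‖)) :=
            mul_le_mul (hg_bound y) (hbnd z y) (norm_nonneg _) (by positivity)
        _ = M * Real.exp ((a + ‖z‖ * ‖ξ‖) * ‖y‖ - (1/(4*t)) * ‖y‖ ^ 2) := by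
            rw [mul_assoc, ← Real.exp_add]; congr 1; ring
    have hdiff : Differentiable ℂ φ := by
      intro z₀
      have hbound : ∀ᵐ y : EuclideanSpace ℝ (Fin d), ∀ z ∈ Metric.ball z₀ 1,
          ‖g y * (Complex.exp (z * ((⟪ξ, y⟫ : ℝ) : ℂ)) * ((⟪ξ, y⟫ : ℝ) : ℂ))‖
            ≤ M * ‖ξ‖ * Real.exp ((a + (‖z₀‖ + 1) * ‖ξ‖ + 1) * ‖y‖ - (1/(4*t)) * ‖y‖ ^ 2) := by
        filter_upwards with y
        intro z hz
        have hzn : ‖z‖ ≤ ‖z₀‖ + 1 := by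
          have h2 := mem_ball_iff_norm.1 hz
          calc ‖z‖ = ‖z₀ + (z - z₀)‖ := by congr 1; ring
            _ ≤ ‖z₀‖ + ‖z - z₀‖ := norm_add_le _ _
            _ ≤ ‖z₀‖ + 1 := by linarith
        have hr : (0:ℝ) ≤ ‖y‖ := norm_nonneg _
        have hin : |⟪ξ, y⟫| ≤ ‖ξ‖ * ‖y‖ := abs_real_inner_le_norm ξ y
        rw [norm_mul, norm_mul (Complex.exp (z * ((⟪ξ, y⟫ : ℝ) : ℂ)))]
        calc ‖g y‖ * (‖Complex.exp (z * ((⟪ξ, y⟫ : ℝ) : ℂ))‖ * ‖((⟪ξ, y⟫ : ℝ) : ℂ)‖)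
            ≤ (M * Real.exp (a * ‖y‖ - (1/(4*t)) * ‖y‖ ^ 2))
              * (Real.exp ((‖z₀‖ + 1) * (‖ξ‖ * ‖y‖)) * (‖ξ‖ * ‖y‖)) := by
              refine mul_le_mul (hg_bound y) ?_ (by positivity) (by positivity)
              refine mul_le_mul ?_ ?_ (norm_nonneg _) (Real.exp_pos _).le
              · refine (hbnd z y).trans (Real.exp_le_exp.2 ?_)
                exact mul_le_mul_of_nonneg_right hzn (by positivity)
              · rw [Complex.norm_real, Real.norm_eq_abs]; exact hin
          _ ≤ (M * Real.exp (a * ‖y‖ - (1/(4*t)) * ‖y‖ ^ 2))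
              * (Real.exp ((‖z₀‖ + 1) * (‖ξ‖ * ‖y‖)) * (‖ξ‖ * Real.exp ‖y‖)) := by
              refine mul_le_mul_of_nonneg_left ?_ (by positivity)
              refine mul_le_mul_of_nonneg_left ?_ (Real.exp_pos _).le
              refine mul_le_mul_of_nonneg_left ?_ (norm_nonneg _)
              calc ‖y‖ ≤ ‖y‖ + 1 := by linarith
                _ ≤ Real.exp ‖y‖ := Real.add_one_le_exp _
          _ = M * ‖ξ‖ * Real.exp ((a + (‖z₀‖ + 1) * ‖ξ‖ + 1) * ‖y‖ - (1/(4*t)) * ‖y‖ ^ 2) := by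
              rw [show (a + (‖z₀‖ + 1) * ‖ξ‖ + 1) * ‖y‖ - (1/(4*t)) * ‖y‖ ^ 2
                  = (a * ‖y‖ - (1/(4*t)) * ‖y‖ ^ 2) + ((‖z₀‖ + 1) * (‖ξ‖ * ‖y‖) + ‖y‖) by ring,
                Real.exp_add, Real.exp_add]
              ring
      have hderiv : ∀ᵐ y : EuclideanSpace ℝ (Fin d), ∀ z ∈ Metric.ball z₀ 1,
          HasDerivAt (fun w : ℂ => g y * Complex.exp (w * ((⟪ξ, y⟫ : ℝ) : ℂ)))
            (g y * (Complex.exp (z * ((⟪ξ, y⟫ : ℝ) : ℂ)) * ((⟪ξ, y⟫ : ℝ) : ℂ))) z := by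
        filter_upwards with y
        intro z hz
        exact ((hasDerivAt_mul_const ((⟪ξ, y⟫ : ℝ) : ℂ)).cexp).const_mul (g y)
      obtain ⟨-, H⟩ := hasDerivAt_integral_of_dominated_loc_of_deriv_le
        (Metric.ball_mem_nhds z₀ one_pos) (Eventually.of_forall fun z => hmeas z) (hFz_int z₀)
        ((hg_cont.mul ((Complex.continuous_exp.comp
          (continuous_const.mul hic')).mul hic')).aestronglyMeasurable)
        hbound
        ((aux_int d (1/(4*t)) (a + (‖z₀‖ + 1) * ‖ξ‖ + 1) (by positivity)).const_mul (M * ‖ξ‖))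
        hderiv
      exact H.differentiableAt
    have hreal : ∀ s : ℝ, φ (s : ℂ) = 0 := by
      intro s
      rw [hφ, ← key ((2*t*s) • ξ)]
      refine integral_congr_ae (Eventually.of_forall fun y => ?_)
      dsimp only
      have h1 : ⟪(2*t*s) • ξ, y⟫ / (2*t) = s * ⟪ξ, y⟫ := by
        rw [real_inner_smul_left]; field_simp
      rw [h1]
      congr 1
      rw [Complex.ofReal_exp]
      congr 1
      push_cast
      ring
    have han : AnalyticOnNhd ℂ φ Set.univ := hdiff.differentiableOn.analyticOnNhd isOpen_univ
    have hfreq : ∃ᶠ z in nhdsWithin (0:ℂ) {(0:ℂ)}ᶜ, φ z = 0 := by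
      rw [Filter.frequently_iff]
      intro U hU
      rw [Metric.mem_nhdsWithin_iff] at hU
      obtain ⟨ε, hε, hsub⟩ := hU
      refine ⟨((ε/2 : ℝ) : ℂ), hsub ⟨?_, ?_⟩, hreal _⟩
      · rw [Metric.mem_ball, Complex.dist_eq]
        simp only [sub_zero, Complex.norm_real, Real.norm_eq_abs]
        rw [abs_of_pos (by positivity)]
        linarith
      · simp only [Set.mem_compl_iff, Set.mem_singleton_iff, Complex.ofReal_eq_zero]
        positivity
    have hzero := han.eqOn_zero_of_preconnected_of_frequently_eq_zero isPreconnected_univ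
      (Set.mem_univ (0:ℂ)) hfreq (Set.mem_univ (-2 * (Real.pi : ℂ) * Complex.I))
    exact hzero
  -- Step 3: 𝓕 g = 0
  have hFg : 𝓕 g = 0 := by
    funext ξ
    rw [Real.fourier_eq']
    simp only [smul_eq_mul, Pi.zero_apply]
    rw [← hF ξ]
    refine integral_congr_ae (Eventually.of_forall fun v => ?_)
    dsimp only
    rw [mul_comm]
    congr 2
    rw [real_inner_comm]
    push_cast
    ring
  -- Step 4: g = 0 by Fourier inversion
  have hg0 : ∀ v : EuclideanSpace ℝ (Fin d), g v = 0 := by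
    intro v
    have h1 : 𝓕⁻ (𝓕 g) v = g v :=
      hg_int.fourierInv_fourier_eq (by rw [hFg]; exact integrable_zero _ _ _) hg_cont.continuousAt
    rw [hFg] at h1
    rw [← h1, Real.fourierInv_eq]
    simp
  intro x
  have := hg0 x
  rw [hg] at this
  simp only [mul_eq_zero, Complex.ofReal_eq_zero] at this
  rcases this with h | h
  · exact h
  · exact absurd h (Real.exp_ne_zero _)
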